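/- Let d ∈ (0,1), let A > 0, and let k be a positive even integer. The WENO-IM mapping function g(ω) = d + (ω − d)^{k+1} A / ((ω − d)^k A + ω(1 − ω)) is monotone non-decreasing on [0,1]: for all ω₁, ω₂ ∈ [0,1] with ω₁ ≤ ω₂, one has g(ω₁) ≤ g(ω₂). -/
import Mathlib

/-- Key algebraic inequality for the WENO-IM monotonicity proof. -/
lemma wenoIM_aux (k : ℕ) (hke : Even k) (d a b : ℝ) (hd0 : 0 < d) (hd1 : d < 1)
    (ha0 : 0 ≤ a) (ha1 : a ≤ 1) (hb1 : b ≤ 1) (hab : a ≤ b) :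
    (a-d)^k*(a-d)*(b*(1-b)) ≤ (b-d)^k*(b-d)*(a*(1-a)) := by
  have hb0 : 0 ≤ b := ha0.trans hab
  rcases le_total d a with h | h
  · -- d ≤ a ≤ b
    have hx0 : 0 ≤ a - d := by linarith
    have hy0 : 0 ≤ b - d := by linarith
    have h1 : (a-d)^k ≤ (b-d)^k := pow_le_pow_left₀ hx0 (by linarith) k
    have h2 : (a-d)*b ≤ (b-d)*a := by nlinarith
    have hxb : 0 ≤ (a-d)*b := mul_nonneg hx0 hb0
    have inner : (a-d)^k*((a-d)*b) ≤ (b-d)^k*((b-d)*a) :=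
      mul_le_mul h1 h2 hxb (pow_nonneg hy0 k)
    have key : (a-d)^k*((a-d)*b)*(1-b) ≤ (b-d)^k*((b-d)*a)*(1-a) :=
      mul_le_mul inner (by linarith) (by linarith)
        (mul_nonneg (pow_nonneg hy0 k) (mul_nonneg hy0 ha0))
    nlinarith [key]
  · rcases le_total d b with h' | h'
    · -- a ≤ d ≤ b
      have hxk : 0 ≤ (a-d)^k := hke.pow_nonneg _
      have hyk : 0 ≤ (b-d)^k := hke.pow_nonneg _
      have hbb : 0 ≤ b*(1-b) := mul_nonneg hb0 (by linarith)
      have haa : 0 ≤ a*(1-a) := mul_nonneg ha0 (by linarith)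
      nlinarith [mul_nonneg hxk hbb, mul_nonneg hyk haa,
        (by linarith : a - d ≤ 0), (by linarith : 0 ≤ b - d)]
    · -- a ≤ b ≤ d
      have e1 : (a-d)^k = (d-a)^k := by
        rw [show a-d = -(d-a) by ring, hke.neg_pow]
      have e2 : (b-d)^k = (d-b)^k := by
        rw [show b-d = -(d-b) by ring, hke.neg_pow]
      have hu0 : 0 ≤ d - b := by linarith
      have hv0 : 0 ≤ d - a := by linarith
      have h1 : (d-b)^k ≤ (d-a)^k := pow_le_pow_left₀ hu0 (by linarith) k
      have h2 : (d-b)*(1-a) ≤ (d-a)*(1-b) := by nlinarith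
      have inner : (d-b)^k*a ≤ (d-a)^k*b :=
        mul_le_mul h1 hab ha0 (pow_nonneg hv0 k)
      have key : (d-b)^k*a*((d-b)*(1-a)) ≤ (d-a)^k*b*((d-a)*(1-b)) :=
        mul_le_mul inner h2 (mul_nonneg hu0 (by linarith))
          (mul_nonneg (pow_nonneg hv0 k) hb0)
      rw [e1, e2]
      nlinarith [key]

/-- For d ∈ (0,1), A > 0 and a positive even integer k, the WENO-IM
mapping function `g(ω) = d + (ω − d)^{k+1} A / ((ω − d)^k A + ω(1 − ω))` is
monotone non-decreasing on [0,1]. -/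
theorem wenoIM_monotone (d : ℝ) (hd : d ∈ Set.Ioo (0:ℝ) 1)
    (A : ℝ) (hA : 0 < A) (k : ℕ) (hk : 0 < k) (hke : Even k)
    (g : ℝ → ℝ)
    (hg : ∀ ω : ℝ, g ω = d + (ω - d)^(k+1) * A / ((ω - d)^k * A + ω*(1 - ω))) :
    ∀ ω₁ ∈ Set.Icc (0:ℝ) 1, ∀ ω₂ ∈ Set.Icc (0:ℝ) 1, ω₁ ≤ ω₂ → g ω₁ ≤ g ω₂ := by
  obtain ⟨hd0, hd1⟩ := hd
  intro ω₁ h₁ ω₂ h₂ h12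
  obtain ⟨h10, h11⟩ := h₁
  obtain ⟨h20, h21⟩ := h₂
  have hden : ∀ ω : ℝ, 0 ≤ ω → ω ≤ 1 → 0 < (ω - d)^k * A + ω*(1-ω) := by
    intro ω hw0 hw1
    rcases eq_or_ne ω d with rfl | h
    · simp only [sub_self, zero_pow hk.ne', zero_mul, zero_add]
      nlinarith
    · have h1 : 0 < (ω - d)^k := hke.pow_pos (sub_ne_zero.mpr h)
      nlinarith [mul_nonneg hw0 (by linarith : (0:ℝ) ≤ 1-ω)]
  have D1 := hden ω₁ h10 h11
  have D2 := hden ω₂ h20 h21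
  have haux := wenoIM_aux k hke d ω₁ ω₂ hd0 hd1 h10 h11 h21 h12
  have hP : (ω₁-d)^k*(ω₂-d)^k*(A*A)*(ω₁-d) ≤ (ω₁-d)^k*(ω₂-d)^k*(A*A)*(ω₂-d) :=
    mul_le_mul_of_nonneg_left (by linarith)
      (mul_nonneg (mul_nonneg (hke.pow_nonneg _) (hke.pow_nonneg _))
        (mul_nonneg hA.le hA.le))
  have main : (ω₁-d)^(k+1) * A * ((ω₂-d)^k * A + ω₂*(1-ω₂)) ≤
      (ω₂-d)^(k+1) * A * ((ω₁-d)^k * A + ω₁*(1-ω₁)) := by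
    rw [pow_succ, pow_succ]
    nlinarith [hP, mul_le_mul_of_nonneg_left haux hA.le]
  rw [hg ω₁, hg ω₂]
  have : (ω₁-d)^(k+1) * A / ((ω₁-d)^k * A + ω₁*(1-ω₁)) ≤
      (ω₂-d)^(k+1) * A / ((ω₂-d)^k * A + ω₂*(1-ω₂)) :=
    (div_le_div_iff₀ D1 D2).mpr main
  linarith
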